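/- Let E be a directed graph, K a field, and x, y ∈ ∂E paths that are not rational. Then V_{[x]} ≅ V_{[y]} as (non-graded) L_K(E)-modules if and only if [x] = [y]. In particular, if x and y are singular vertices, then V_{[x]} ≅ V_{[y]} if and only if x = y. -/

import Mathlib

open scoped Classical

/-- A directed graph: vertices, edges, source and range maps. -/
structure DirGraph : Type 1 where
  V : Type
  E : Type
  s : E → V
  r : E → V

namespace DirGraph

variable (G : DirGraph)

/-- A finite path: a source vertex together with a compatible list of edges
(the empty list gives the path of length 0 at `src`). -/
structure FinPath where
  src : G.V
  edges : List G.E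
  src_eq : ∀ e ∈ edges.head?, G.s e = src
  chain : edges.Chain' (fun e f => G.r e = G.s f)

variable {G}

/-- The range of a finite path. -/
def FinPath.rng (μ : G.FinPath) : G.V :=
  ((μ.edges.getLast?).map G.r).getD μ.src

/-- The length of a finite path. -/
def FinPath.length (μ : G.FinPath) : ℕ := μ.edges.length

variable (G)

/-- An infinite path. -/
structure InfPath where
  edges : ℕ → G.E
  chain : ∀ n, G.r (edges n) = G.s (edges (n + 1))

/-- The source of an infinite path. -/
def InfPath.src {G : DirGraph} (p : G.InfPath) : G.V := G.s (p.edges 0)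

def IsSink (v : G.V) : Prop := ∀ e, G.s e ≠ v

def IsInfEmitter (v : G.V) : Prop := {e | G.s e = v}.Infinite

def IsSingular (v : G.V) : Prop := IsSink G v ∨ IsInfEmitter G v

/-- Boundary paths: infinite paths, together with finite paths ending in a singular vertex. -/
def BPath : Type := {x : G.FinPath ⊕ G.InfPath // ∀ μ, x = Sum.inl μ → IsSingular G μ.rng}

variable {G}

/-- The source of a boundary path. -/
def BPath.src (x : G.BPath) : G.V :=
  match x.1 with
  | Sum.inl μ => μ.src
  | Sum.inr p => p.src

def BPath.IsInfinite (x : G.BPath) : Prop := ∃ p, x.1 = Sum.inr p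

/-- `IsCat μ p x` means `x = μ p`, i.e. `x` is the concatenation of the finite path `μ`
with the boundary path `p` (in particular `r(μ) = s(p)`). -/
def IsCat (μ : G.FinPath) (p x : G.BPath) : Prop :=
  μ.rng = p.src ∧
  match p.1, x.1 with
  | Sum.inl q, Sum.inl ξ => ξ.src = μ.src ∧ ξ.edges = μ.edges ++ q.edges
  | Sum.inr q, Sum.inr ξ =>
      (∀ (i : ℕ) (h : i < μ.edges.length), ξ.edges i = μ.edges.get ⟨i, h⟩) ∧
      (∀ i : ℕ, ξ.edges (μ.edges.length + i) = q.edges i)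
  | _, _ => False

/-- `x ∼_k y` : tail equivalence with lag `k`. -/
def TailEqLag (x y : G.BPath) (k : ℤ) : Prop :=
  ∃ (μ ν : G.FinPath) (p : G.BPath),
    IsCat μ p x ∧ IsCat ν p y ∧ (μ.length : ℤ) - (ν.length : ℤ) = k

/-- Tail equivalence. -/
def TailEq (x y : G.BPath) : Prop := ∃ k, TailEqLag x y k

/-- The tail-equivalence class (orbit) of a boundary path. -/
def orbit (x : G.BPath) : Set G.BPath := {y | TailEq y x}

/-- A closed path: positive length, same source and range. -/
def FinPath.IsClosed (c : G.FinPath) : Prop := 0 < c.length ∧ c.rng = c.src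

/-- A boundary path is rational if it is tail equivalent to `c^∞` for some closed path `c`;
here `c^∞` is characterized as the unique boundary path `p` with `p = c p`. -/
def IsRational (x : G.BPath) : Prop :=
  ∃ (c : G.FinPath) (p : G.BPath), 0 < c.length ∧ IsCat c p p ∧ TailEq x p

/-- A simple closed path: a closed path which is not a proper power of a closed path. -/
def FinPath.IsSimpleClosed (c : G.FinPath) : Prop :=
  c.IsClosed ∧
    ¬ ∃ (d : G.FinPath) (n : ℕ), 2 ≤ n ∧ d.IsClosed ∧ c.src = d.src ∧
        c.edges = (List.replicate n d.edges).flatten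

/-- A cycle: a closed path passing through no vertex twice. -/
def FinPath.IsCycle (c : G.FinPath) : Prop := c.IsClosed ∧ (c.edges.map G.s).Nodup

/-- An exit for a finite path. -/
def FinPath.HasExit (c : G.FinPath) : Prop :=
  ∃ (i : ℕ) (h : i < c.edges.length) (e : G.E),
    G.s e = G.s (c.edges.get ⟨i, h⟩) ∧ e ≠ c.edges.get ⟨i, h⟩

/-- `c` is a rotation of `d`. -/
def FinPath.IsRotationOf (c d : G.FinPath) : Prop := ∃ i, c.edges = d.edges.rotate i

/-- A maximal cycle: a cycle such that any cycle from which there is a finite path to its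
source is a rotation of it. -/
def FinPath.IsMaxCycle (c : G.FinPath) : Prop :=
  c.IsCycle ∧ ∀ d : G.FinPath, d.IsCycle →
    (∃ μ : G.FinPath, μ.src = d.src ∧ μ.rng = c.src) → d.IsRotationOf c

/-- A maximal sink: a sink with no finite path from the source of any cycle to it. -/
def IsMaxSink (G : DirGraph) (v : G.V) : Prop :=
  IsSink G v ∧ ¬ ∃ (d μ : G.FinPath), d.IsCycle ∧ μ.src = d.src ∧ μ.rng = v

/-- A graph is row-finite if every vertex emits finitely many edges. -/
def RowFinite (G : DirGraph) : Prop := ∀ v : G.V, {e | G.s e = v}.Finite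

/-- The set of predecessors of a vertex. -/
def preds (G : DirGraph) (v : G.V) : Set G.V := {w | ∃ μ : G.FinPath, μ.src = w ∧ μ.rng = v}

/-- The finite path of length 0 at a vertex. -/
def vertexPath (G : DirGraph) (v : G.V) : G.FinPath :=
  ⟨v, [], by intro e he; simp at he, List.isChain_nil⟩

/-- A singular vertex, seen as a boundary path. -/
def vertexBPath (G : DirGraph) (v : G.V) (h : IsSingular G v) : G.BPath :=
  ⟨Sum.inl (vertexPath G v), by
    intro μ hμ
    injection hμ with h2
    subst h2
    exact h⟩

/-- The finite path consisting of a single edge. -/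
def singleE (G : DirGraph) (e : G.E) : G.FinPath :=
  ⟨G.s e, [e], by
    intro f hf
    simp only [List.head?_cons, Option.mem_def, Option.some.injEq] at hf
    subst hf
    rfl, List.isChain_singleton e⟩

/-- `a_μ`: the product of the values of `a` along a finite path. -/
def aval {G : DirGraph} {K : Type} [Field K] (a : G.E → K) (μ : G.FinPath) : K :=
  (μ.edges.map a).prod

/-! ## The Leavitt path algebra -/

/-- Generators of the Leavitt path algebra: vertices, edges and ghost edges. -/
inductive Gen (G : DirGraph) : Type
  | vtx : G.V → Gen G
  | edg : G.E → Gen G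
  | ghd : G.E → Gen G

/-- The defining relations of the Leavitt path algebra. -/
inductive LRel (G : DirGraph) (K : Type) [Field K] :
    FreeAlgebra K (Gen G) → FreeAlgebra K (Gen G) → Prop
  | vv_eq (v : G.V) :
      LRel G K (FreeAlgebra.ι K (Gen.vtx v) * FreeAlgebra.ι K (Gen.vtx v))
        (FreeAlgebra.ι K (Gen.vtx v))
  | vv_ne {v w : G.V} (h : v ≠ w) :
      LRel G K (FreeAlgebra.ι K (Gen.vtx v) * FreeAlgebra.ι K (Gen.vtx w)) 0
  | e1l (e : G.E) :
      LRel G K (FreeAlgebra.ι K (Gen.vtx (G.s e)) * FreeAlgebra.ι K (Gen.edg e))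
        (FreeAlgebra.ι K (Gen.edg e))
  | e1r (e : G.E) :
      LRel G K (FreeAlgebra.ι K (Gen.edg e) * FreeAlgebra.ι K (Gen.vtx (G.r e)))
        (FreeAlgebra.ι K (Gen.edg e))
  | e2l (e : G.E) :
      LRel G K (FreeAlgebra.ι K (Gen.vtx (G.r e)) * FreeAlgebra.ι K (Gen.ghd e))
        (FreeAlgebra.ι K (Gen.ghd e))
  | e2r (e : G.E) :
      LRel G K (FreeAlgebra.ι K (Gen.ghd e) * FreeAlgebra.ι K (Gen.vtx (G.s e)))
        (FreeAlgebra.ι K (Gen.ghd e))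
  | ck1_eq (e : G.E) :
      LRel G K (FreeAlgebra.ι K (Gen.ghd e) * FreeAlgebra.ι K (Gen.edg e))
        (FreeAlgebra.ι K (Gen.vtx (G.r e)))
  | ck1_ne {e f : G.E} (h : e ≠ f) :
      LRel G K (FreeAlgebra.ι K (Gen.ghd e) * FreeAlgebra.ι K (Gen.edg f)) 0
  | ck2 (v : G.V) (hfin : {e | G.s e = v}.Finite) (hne : ∃ e, G.s e = v) :
      LRel G K (FreeAlgebra.ι K (Gen.vtx v))
        (∑ e ∈ hfin.toFinset, FreeAlgebra.ι K (Gen.edg e) * FreeAlgebra.ι K (Gen.ghd e))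

/-- The Leavitt path algebra of `G` over `K`. -/
abbrev LPA (G : DirGraph) (K : Type) [Field K] : Type := RingQuot (LRel G K)

/-- The image of a vertex in the Leavitt path algebra. -/
def ofV (G : DirGraph) (K : Type) [Field K] (v : G.V) : LPA G K :=
  RingQuot.mkAlgHom K (LRel G K) (FreeAlgebra.ι K (Gen.vtx v))

/-- The image of an edge in the Leavitt path algebra. -/
def ofE (G : DirGraph) (K : Type) [Field K] (e : G.E) : LPA G K :=
  RingQuot.mkAlgHom K (LRel G K) (FreeAlgebra.ι K (Gen.edg e))

/-- The image of a ghost edge in the Leavitt path algebra. -/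
def ofG (G : DirGraph) (K : Type) [Field K] (e : G.E) : LPA G K :=
  RingQuot.mkAlgHom K (LRel G K) (FreeAlgebra.ι K (Gen.ghd e))

/-- The element `μ` of the Leavitt path algebra associated to a finite path `μ`. -/
def pathElem (G : DirGraph) (K : Type) [Field K] (μ : G.FinPath) : LPA G K :=
  ofV G K μ.src * (μ.edges.map (ofE G K)).prod

/-- The element `μ^*` of the Leavitt path algebra associated to a finite path `μ`. -/
def pathStarElem (G : DirGraph) (K : Type) [Field K] (μ : G.FinPath) : LPA G K :=
  (μ.edges.reverse.map (ofG G K)).prod * ofV G K μ.src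

/-- The degree-`n` homogeneous component of the canonical `ℤ`-grading of the Leavitt
path algebra: the span of the monomials `μ ν^*` with `|μ| - |ν| = n`. -/
def LPAdeg (G : DirGraph) (K : Type) [Field K] (n : ℤ) : Submodule K (LPA G K) :=
  Submodule.span K {x | ∃ μ ν : G.FinPath, μ.rng = ν.rng ∧
    (μ.length : ℤ) - (ν.length : ℤ) = n ∧ x = pathElem G K μ * pathStarElem G K ν}

/-- `W` is a `ℤ`-grading making `M` a graded module over the canonically graded
Leavitt path algebra. -/
def IsModuleGrading (G : DirGraph) (K : Type) [Field K] (M : Type) [AddCommGroup M]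
    [Module K M] [Module (LPA G K) M] (W : ℤ → Submodule K M) : Prop :=
  DirectSum.IsInternal W ∧
    ∀ (m k : ℤ) (a : LPA G K) (y : M), a ∈ LPAdeg G K m → y ∈ W k → a • y ∈ W (m + k)

/-- A set is graded (with respect to a grading `W`) if each of its elements is a finite sum
of homogeneous elements of the set. -/
def GradedCarrier {K M : Type} [Field K] [AddCommGroup M] [Module K M]
    (W : ℤ → Submodule K M) (S : Set M) : Prop :=
  ∀ m ∈ S, ∃ l : List M, (∀ z ∈ l, z ∈ S ∧ ∃ k, z ∈ W k) ∧ l.sum = m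

/-- A graded isomorphism between graded modules over the Leavitt path algebra. -/
def GradedIsoLPA (G : DirGraph) (K : Type) [Field K] (M N : Type)
    [AddCommGroup M] [AddCommGroup N] [Module K M] [Module K N]
    [Module (LPA G K) M] [Module (LPA G K) N]
    (W : ℤ → Submodule K M) (W' : ℤ → Submodule K N) : Prop :=
  ∃ f : M ≃ₗ[LPA G K] N, (∀ k, ∀ m ∈ W k, f m ∈ W' k) ∧ ∀ k, ∀ n ∈ W' k, f.symm n ∈ W k

/-- A module over the Leavitt path algebra is unital if it is generated by the images of the
vertices. -/
def IsUnitalModule (G : DirGraph) (K : Type) [Field K] (M : Type) [AddCommGroup M]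
    [Module (LPA G K) M] : Prop :=
  ∀ m : M, m ∈ Submodule.span (LPA G K) {y : M | ∃ (v : G.V) (m' : M), y = ofV G K v • m'}

/-! ## Chen modules, specified by a basis and the action of the generators -/

/-- A specification of the (twisted) Chen module attached to a boundary path `x`:
an `L_K(E)`-module `M` which is a `K'`-vector space with basis the tail-equivalence class
of `x`, the generators acting by the τ-twisted shift formulas. Here `K ⊆ K'` is a field
extension and `τ : E¹ → K'` is a family of nonzero scalars. -/
structure ChenSpecT (G : DirGraph) (K K' : Type) [Field K] [Field K'] [Algebra K K']
    (τ : G.E → K') (x : G.BPath) (M : Type) [AddCommGroup M] [Module K' M]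
    [Module (LPA G K) M] : Type where
  tau_ne : ∀ e, τ e ≠ 0
  basis : Module.Basis (orbit x) K' M
  act_v : ∀ (v : G.V) (p : orbit x),
    ofV G K v • basis p = if v = BPath.src (p : G.BPath) then basis p else 0
  act_e : ∀ (e : G.E) (p q : orbit x), IsCat (singleE G e) (p : G.BPath) (q : G.BPath) →
    ofE G K e • basis p = τ e • basis q
  act_e_zero : ∀ (e : G.E) (p : orbit x),
    (¬ ∃ q : G.BPath, IsCat (singleE G e) (p : G.BPath) q) → ofE G K e • basis p = 0
  act_g : ∀ (e : G.E) (p q : orbit x), IsCat (singleE G e) (p : G.BPath) (q : G.BPath) →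
    ofG G K e • basis q = (τ e)⁻¹ • basis p
  act_g_zero : ∀ (e : G.E) (q : orbit x),
    (¬ ∃ p : G.BPath, IsCat (singleE G e) p (q : G.BPath)) → ofG G K e • basis q = 0

/-- Specification of the Chen module `V_{[x]}^a` twisted by `a : E¹ → K^*`
(`a = 1` gives `V_{[x]}`). -/
abbrev ChenSpec (G : DirGraph) (K : Type) [Field K] (a : G.E → K) (x : G.BPath) (M : Type)
    [AddCommGroup M] [Module K M] [Module (LPA G K) M] : Type :=
  ChenSpecT G K K a x M

/-- The canonical grading on a Chen module: the degree-`k` component is spanned by the basis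
elements tail-equivalent to `x` with lag `k`. -/
def chenW {G : DirGraph} {K' : Type} [Field K'] {x : G.BPath} {M : Type}
    [AddCommGroup M] [Module K' M] (b : Module.Basis (orbit x) K' M) (k : ℤ) : Submodule K' M :=
  Submodule.span K' (⇑b '' {p : orbit x | TailEqLag (p : G.BPath) x k})

/-! ## The module `K L_x` -/

/-- The set `L_x` of pairs `(y, k)` with `y ∼_k x`. -/
def Lset (G : DirGraph) (x : G.BPath) : Set (G.BPath × ℤ) := {yk | TailEqLag yk.1 x yk.2}

/-- The underlying `K`-vector space of the module `K L_x`, with basis `L_x`. -/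
abbrev KLCarrier (G : DirGraph) (K : Type) [Field K] (x : G.BPath) : Type := (Lset G x) →₀ K

/-- Specification of the `L_K(E)`-module structure on `K L_x`, given by
`(μ ν^*) ⬝ (y, k) = (μ p, |μ| - |ν| + k)` when `y = ν p`, and `0` otherwise. The module
structure is encoded as a `K`-algebra homomorphism `ρ` to the endomorphism algebra. -/
def KLSpec (G : DirGraph) (K : Type) [Field K] (x : G.BPath)
    (ρ : LPA G K →ₐ[K] Module.End K (KLCarrier G K x)) : Prop :=
  (∀ (μ ν : G.FinPath), μ.rng = ν.rng → ∀ (yk zk : Lset G x) (p : G.BPath),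
      IsCat ν p (yk : G.BPath × ℤ).1 → IsCat μ p (zk : G.BPath × ℤ).1 →
      (zk : G.BPath × ℤ).2 = (yk : G.BPath × ℤ).2 + (μ.length : ℤ) - (ν.length : ℤ) →
      ρ (pathElem G K μ * pathStarElem G K ν) (Finsupp.single yk 1) = Finsupp.single zk 1) ∧
  (∀ (μ ν : G.FinPath), μ.rng = ν.rng → ∀ yk : Lset G x,
      (¬ ∃ p : G.BPath, IsCat ν p (yk : G.BPath × ℤ).1) →
      ρ (pathElem G K μ * pathStarElem G K ν) (Finsupp.single yk 1) = 0)

/-- The canonical grading of `K L_x`: `(y, k)` is homogeneous of degree `k`. -/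
noncomputable def KLgr (G : DirGraph) (K : Type) [Field K] (x : G.BPath) (k : ℤ) :
    Submodule K (KLCarrier G K x) :=
  Submodule.span K {m | ∃ yk : Lset G x, (yk : G.BPath × ℤ).2 = k ∧ m = Finsupp.single yk 1}

end DirGraph

open DirGraph

namespace DirGraph

variable {G : DirGraph}

theorem FinPath.ext' {μ ν : G.FinPath} (h1 : μ.src = ν.src) (h2 : μ.edges = ν.edges) :
    μ = ν := by
  cases μ; cases ν; simp only at h1 h2; subst h1; subst h2; rfl

theorem InfPath.ext' {P Q : G.InfPath} (h : P.edges = Q.edges) : P = Q := by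
  cases P; cases Q; simp only at h; subst h; rfl

theorem BPath.ext' {p q : G.BPath} (h : p.1 = q.1) : p = q := Subtype.ext h

theorem isCat_ll {μ ρ ξ : G.FinPath} {hp hq} :
    IsCat μ (⟨Sum.inl ρ, hp⟩ : G.BPath) ⟨Sum.inl ξ, hq⟩ ↔
      μ.rng = ρ.src ∧ ξ.src = μ.src ∧ ξ.edges = μ.edges ++ ρ.edges := Iff.rfl

theorem isCat_rr {μ : G.FinPath} {P Q : G.InfPath} {hp hq} :
    IsCat μ (⟨Sum.inr P, hp⟩ : G.BPath) ⟨Sum.inr Q, hq⟩ ↔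
      μ.rng = G.s (P.edges 0) ∧
      (∀ i (h : i < μ.edges.length), Q.edges i = μ.edges.get ⟨i, h⟩) ∧
      (∀ i, Q.edges (μ.edges.length + i) = P.edges i) := Iff.rfl

theorem not_isCat_lr {μ ρ : G.FinPath} {Q : G.InfPath} {hp hq} :
    ¬ IsCat μ (⟨Sum.inl ρ, hp⟩ : G.BPath) ⟨Sum.inr Q, hq⟩ := fun h => h.2

theorem not_isCat_rl {μ ξ : G.FinPath} {P : G.InfPath} {hp hq} :
    ¬ IsCat μ (⟨Sum.inr P, hp⟩ : G.BPath) ⟨Sum.inl ξ, hq⟩ := fun h => h.2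

theorem BPath.src_inl {ρ : G.FinPath} {hp} :
    BPath.src (⟨Sum.inl ρ, hp⟩ : G.BPath) = ρ.src := rfl

theorem BPath.src_inr {P : G.InfPath} {hp} :
    BPath.src (⟨Sum.inr P, hp⟩ : G.BPath) = G.s (P.edges 0) := rfl

theorem IsCat.rng_eq {μ : G.FinPath} {p q : G.BPath} (h : IsCat μ p q) :
    μ.rng = p.src := h.1

theorem rng_nil {μ : G.FinPath} (h : μ.edges = []) : μ.rng = μ.src := by
  unfold FinPath.rng; rw [h]; rfl

theorem rng_eq_of_edges_ne_nil {μ ν : G.FinPath} (h : μ.edges = ν.edges)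
    (hne : μ.edges ≠ []) : μ.rng = ν.rng := by
  unfold FinPath.rng
  rw [h]
  cases hν : ν.edges with
  | nil => exact absurd (h.trans hν) hne
  | cons a l =>
    cases hgl : (a :: l).getLast? with
    | none => simp [List.getLast?_eq_none_iff] at hgl
    | some b => simp [hgl]

theorem IsCat.src_eq {μ : G.FinPath} {p q : G.BPath} (h : IsCat μ p q) :
    q.src = μ.src := by
  obtain ⟨pv, hps⟩ := p
  obtain ⟨qv, hqs⟩ := q
  cases pv with
  | inl ρ =>
    cases qv with
    | inl ξ => exact (isCat_ll.mp h).2.1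
    | inr Q => exact absurd h not_isCat_lr
  | inr P =>
    cases qv with
    | inl ξ => exact absurd h not_isCat_rl
    | inr Q =>
      obtain ⟨h1, h2, h3⟩ := isCat_rr.mp h
      rw [BPath.src_inr]
      cases hμe : μ.edges with
      | nil =>
        have := h3 0
        rw [hμe] at this
        simp only [List.length_nil, Nat.zero_add] at this
        rw [this, ← h1, rng_nil hμe]
      | cons e t =>
        have h0 : 0 < μ.edges.length := by rw [hμe]; simp
        have he : Q.edges 0 = e := by
          have := h2 0 h0
          rw [this]
          simp [List.get_eq_getElem, hμe]
        rw [he]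
        apply μ.src_eq
        rw [hμe]; rfl

theorem cat_nil {μ : G.FinPath} {p q : G.BPath} (h : IsCat μ p q)
    (hμ : μ.edges = []) : p = q := by
  obtain ⟨pv, hps⟩ := p
  obtain ⟨qv, hqs⟩ := q
  cases pv with
  | inl ρ =>
    cases qv with
    | inl ξ =>
      obtain ⟨h1, h2, h3⟩ := isCat_ll.mp h
      refine BPath.ext' ?_
      simp only
      congr 1
      refine FinPath.ext' ?_ ?_
      · rw [h2, ← h1, rng_nil hμ]
      · rw [h3, hμ]; rfl
    | inr Q => exact absurd h not_isCat_lr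
  | inr P =>
    cases qv with
    | inl ξ => exact absurd h not_isCat_rl
    | inr Q =>
      obtain ⟨h1, h2, h3⟩ := isCat_rr.mp h
      refine BPath.ext' ?_
      simp only
      congr 1
      refine InfPath.ext' ?_
      funext i
      have := h3 i
      rw [hμ] at this
      simpa using this.symm

theorem cat_trivial (p : G.BPath) : IsCat (vertexPath G p.src) p p := by
  obtain ⟨pv, hps⟩ := p
  cases pv with
  | inl ρ => exact isCat_ll.mpr ⟨rfl, rfl, rfl⟩
  | inr P => exact isCat_rr.mpr ⟨rfl, fun i h => by simp [vertexPath] at h, fun i => by simp [vertexPath]⟩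

end DirGraph

namespace DirGraph

variable {G : DirGraph}

theorem append_split {α : Type*} {l₁ l₂ l₃ l₄ : List α} (h : l₁ ++ l₂ = l₃ ++ l₄)
    (hle : l₁.length ≤ l₃.length) : ∃ t, l₃ = l₁ ++ t ∧ l₂ = t ++ l₄ := by
  have h1 : l₁ = l₃.take l₁.length := by
    have := congrArg (List.take l₁.length) h
    rwa [List.take_left, List.take_append_of_le_length hle] at this
  have h3 : l₃ = l₁ ++ l₃.drop l₁.length := by
    conv_lhs => rw [← List.take_append_drop l₁.length l₃, ← h1]
  refine ⟨l₃.drop l₁.length, h3, ?_⟩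
  have h4 : l₁ ++ l₂ = l₁ ++ (l₃.drop l₁.length ++ l₄) := by
    rw [← List.append_assoc, ← h3, h]
  exact (List.append_right_inj l₁).mp h4

theorem rng_mem_getLast? {μ : G.FinPath} {e : G.E} (h : e ∈ μ.edges.getLast?) :
    μ.rng = G.r e := by
  unfold FinPath.rng
  rw [Option.mem_def] at h
  rw [h]; rfl

theorem getD_last_indep {l : List G.E} (hl : l ≠ []) (v w : G.V) :
    ((l.getLast?).map G.r).getD v = ((l.getLast?).map G.r).getD w := by
  obtain ⟨b, hb⟩ := Option.isSome_iff_exists.mp (List.getLast?_isSome.mpr hl)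
  rw [hb]; rfl

/-- concatenation of cats -/
theorem cat_assoc {μ ν : G.FinPath} {p q' q : G.BPath} (h1 : IsCat μ q' q)
    (h2 : IsCat ν p q') :
    ∃ ρ : G.FinPath, ρ.src = μ.src ∧ ρ.edges = μ.edges ++ ν.edges ∧ IsCat ρ p q := by
  have hsν : q'.src = ν.src := h2.src_eq
  have hrμ : μ.rng = q'.src := h1.rng_eq
  have hrν : ν.rng = p.src := h2.rng_eq
  have hchain : (μ.edges ++ ν.edges).Chain' (fun e f => G.r e = G.s f) := by
    refine List.isChain_append.mpr ⟨μ.chain, ν.chain, ?_⟩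
    intro a ha b hb
    have h3 : μ.rng = G.r a := rng_mem_getLast? ha
    have h4 : G.s b = ν.src := ν.src_eq b hb
    rw [← h3, h4, ← hsν, ← hrμ]
  have hsrc : ∀ e ∈ (μ.edges ++ ν.edges).head?, G.s e = μ.src := by
    intro e he
    cases hμe : μ.edges with
    | nil =>
      rw [hμe, List.nil_append] at he
      rw [ν.src_eq e he, ← hsν, ← hrμ, rng_nil hμe]
    | cons f t =>
      apply μ.src_eq
      rw [hμe]
      rw [hμe] at he
      exact he
  refine ⟨⟨μ.src, μ.edges ++ ν.edges, hsrc, hchain⟩, rfl, rfl, ?_, ?_⟩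
  · -- rng = p.src
    show ((Option.map G.r (μ.edges ++ ν.edges).getLast?).getD μ.src) = p.src
    by_cases hνe : ν.edges = []
    · have hpq : p = q' := cat_nil h2 hνe
      rw [hνe, List.append_nil]
      show μ.rng = p.src
      rw [hrμ, hpq]
    · rw [List.getLast?_append_of_ne_nil _ hνe, getD_last_indep hνe _ ν.src]
      show ν.rng = p.src
      exact hrν
  · -- match component
    obtain ⟨pv, hps⟩ := p
    obtain ⟨q'v, hq's⟩ := q'
    obtain ⟨qv, hqs⟩ := q
    cases pv with
    | inl ρp =>
      cases q'v with
      | inr => exact absurd h2 not_isCat_lr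
      | inl ξ' =>
        cases qv with
        | inr => exact absurd h1 not_isCat_lr
        | inl ξ =>
          obtain ⟨_, h1b, h1c⟩ := isCat_ll.mp h1
          obtain ⟨_, h2b, h2c⟩ := isCat_ll.mp h2
          exact ⟨h1b, by rw [h1c, h2c, List.append_assoc]⟩
    | inr P =>
      cases q'v with
      | inl => exact absurd h2 not_isCat_rl
      | inr Q' =>
        cases qv with
        | inl => exact absurd h1 not_isCat_rl
        | inr Q =>
          obtain ⟨_, h1b, h1c⟩ := isCat_rr.mp h1
          obtain ⟨_, h2b, h2c⟩ := isCat_rr.mp h2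
          constructor
          · intro i hi
            simp only [List.length_append] at hi
            simp only [List.get_eq_getElem]
            rcases Nat.lt_or_ge i μ.edges.length with hlt | hge
            · rw [List.getElem_append_left hlt]
              have := h1b i hlt
              simpa [List.get_eq_getElem] using this
            · obtain ⟨j, rfl⟩ : ∃ j, i = μ.edges.length + j := ⟨i - μ.edges.length, by omega⟩
              rw [List.getElem_append_right (by omega)]
              have hj : j < ν.edges.length := by omega
              have e3 := h1c j
              have e4 := h2b j hj
              simp only [List.get_eq_getElem] at e4
              rw [e3, e4]
              congr 1
              omega
          · intro i
            simp only [List.length_append]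
            rw [Nat.add_assoc, h1c, h2c]

/-- peel a single edge from a boundary path whose underlying finite path starts with `e` -/
theorem peel_inl {q : G.BPath} {ξ : G.FinPath} {e : G.E} {t : List G.E}
    (hq : q.1 = Sum.inl ξ) (hξ : ξ.edges = e :: t) :
    ∃ p, IsCat (singleE G e) p q := by
  have hchain : t.Chain' (fun e f => G.r e = G.s f) := by
    have := ξ.chain; rw [hξ] at this; exact this.tail
  have hsrc : ∀ f ∈ t.head?, G.s f = G.r e := by
    intro f hf
    cases t with
    | nil => simp at hf
    | cons f' t' =>
      simp only [List.head?_cons, Option.mem_def, Option.some.injEq] at hf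
      subst hf
      have := ξ.chain
      rw [hξ] at this
      exact (List.isChain_cons_cons.mp this).1.symm
  have hrng : FinPath.rng (⟨G.r e, t, hsrc, hchain⟩ : G.FinPath) = ξ.rng := by
    show (Option.map G.r t.getLast?).getD (G.r e) = ξ.rng
    by_cases ht : t = []
    · subst ht
      show G.r e = ξ.rng
      symm
      apply rng_mem_getLast?
      rw [hξ]; rfl
    · have : ξ.edges.getLast? = t.getLast? := by
        rw [hξ, ← List.getLast?_append_of_ne_nil [e] ht]; rfl
      unfold FinPath.rng
      rw [this]
      exact getD_last_indep ht _ _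
  have hsing : ∀ μ', (Sum.inl ⟨G.r e, t, hsrc, hchain⟩ : G.FinPath ⊕ G.InfPath) = Sum.inl μ' →
      IsSingular G μ'.rng := by
    intro μ' hμ'
    injection hμ' with hh
    subst hh
    rw [hrng]
    exact q.2 ξ hq
  obtain ⟨qv, hqs⟩ := q
  simp only at hq
  subst hq
  refine ⟨⟨Sum.inl ⟨G.r e, t, hsrc, hchain⟩, hsing⟩, ?_⟩
  refine isCat_ll.mpr ⟨rfl, ?_, ?_⟩
  · exact (ξ.src_eq e (by rw [hξ]; rfl)).symm
  · rw [hξ]; rfl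

theorem peel_inr {q : G.BPath} {Q : G.InfPath} (hq : q.1 = Sum.inr Q) :
    ∃ p, IsCat (singleE G (Q.edges 0)) p q := by
  obtain ⟨qv, hqs⟩ := q
  simp only at hq
  subst hq
  refine ⟨⟨Sum.inr ⟨fun i => Q.edges (i + 1), fun n => by
    have := Q.chain (n + 1); simpa using this⟩, by intro μ h; simp at h⟩, ?_⟩
  refine isCat_rr.mpr ⟨?_, ?_, ?_⟩
  · show G.r (Q.edges 0) = G.s (Q.edges 1)
    exact Q.chain 0
  · intro i hi
    simp only [singleE, List.length_cons, List.length_nil] at hi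
    interval_cases i
    rfl
  · intro i
    show Q.edges (1 + i) = Q.edges (i + 1)
    rw [Nat.add_comm]

/-- refinement of two concatenation decompositions of the same path -/
theorem cat_refine {ν ν' : G.FinPath} {p p' y : G.BPath}
    (h : IsCat ν p y) (h' : IsCat ν' p' y) (hle : ν.edges.length ≤ ν'.edges.length) :
    ∃ ρ : G.FinPath, IsCat ρ p' p ∧ ν'.edges = ν.edges ++ ρ.edges := by
  obtain ⟨yv, hys⟩ := y
  cases yv with
  | inl ξ =>
    obtain ⟨pv, hps⟩ := p
    cases pv with
    | inr => exact absurd h not_isCat_rl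
    | inl ρp =>
      obtain ⟨p'v, hp's⟩ := p'
      cases p'v with
      | inr => exact absurd h' not_isCat_rl
      | inl ρp' =>
        obtain ⟨ha, hb, hc⟩ := isCat_ll.mp h
        obtain ⟨ha', hb', hc'⟩ := isCat_ll.mp h'
        obtain ⟨t, ht1, ht2⟩ := append_split (hc.symm.trans hc') hle
        have hchain : t.Chain' (fun e f => G.r e = G.s f) := by
          have := ρp.chain
          rw [ht2] at this
          exact (List.isChain_append.mp this).1
        have hsrc : ∀ f ∈ t.head?, G.s f = ρp.src := by
          intro f hf
          apply ρp.src_eq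
          rw [ht2]
          cases t with
          | nil => simp at hf
          | cons a l => exact hf
        refine ⟨⟨ρp.src, t, hsrc, hchain⟩, ⟨?_, ?_, ?_⟩, ht1⟩
        · -- rng = ρp'.src
          show (Option.map G.r t.getLast?).getD ρp.src = ρp'.src
          rw [← ha']
          by_cases ht : t = []
          · subst ht
            show ρp.src = ν'.rng
            rw [← ha]
            -- ν.rng = ν'.rng : edges equal and srcs equal
            have hee : ν'.edges = ν.edges := by rw [ht1, List.append_nil]
            by_cases hνe : ν.edges = []
            · rw [rng_nil hνe, rng_nil (by rw [hee, hνe]), ← hb, ← hb']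
            · unfold FinPath.rng
              rw [hee]
              exact (getD_last_indep hνe _ _).symm
          · have hgl : ν'.edges.getLast? = t.getLast? := by
              rw [ht1, List.getLast?_append_of_ne_nil _ ht]
            unfold FinPath.rng
            rw [hgl]
            exact getD_last_indep ht _ _
        · rfl
        · exact ht2
  | inr Q =>
    obtain ⟨pv, hps⟩ := p
    cases pv with
    | inl => exact absurd h not_isCat_lr
    | inr P =>
      obtain ⟨p'v, hp's⟩ := p'
      cases p'v with
      | inl => exact absurd h' not_isCat_lr
      | inr P' =>
        obtain ⟨ha, hb, hc⟩ := isCat_rr.mp h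
        obtain ⟨ha', hb', hc'⟩ := isCat_rr.mp h'
        have htake : ν.edges = ν'.edges.take ν.edges.length := by
          apply List.ext_getElem
          · simp [Nat.min_eq_left hle]
          · intro i h1 h2
            have e1 := hb i h1
            have e2 := hb' i (by omega)
            simp only [List.get_eq_getElem] at e1 e2
            have h3 : (List.take ν.edges.length ν'.edges)[i] = ν'.edges[i]'(by omega) := by
              simp [List.getElem_take]
            rw [h3]
            exact e1.symm.trans e2
        obtain ⟨t, hts⟩ : ∃ t, t = ν'.edges.drop ν.edges.length := ⟨_, rfl⟩
        have ht1 : ν'.edges = ν.edges ++ t := by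
          rw [hts]
          conv_lhs => rw [← List.take_append_drop ν.edges.length ν'.edges, ← htake]
        have hlt : t.length = ν'.edges.length - ν.edges.length := by
          rw [hts]; simp
        have hchain : t.Chain' (fun e f => G.r e = G.s f) := by
          have := ν'.chain
          rw [ht1] at this
          exact (List.isChain_append.mp this).2.1
        have hget : ∀ i (h : i < t.length), t[i] = Q.edges (ν.edges.length + i) := by
          intro i hi
          have h2 : ν.edges.length + i < ν'.edges.length := by omega
          have h4 : t[i] = ν'.edges[ν.edges.length + i]'h2 := by
            have : t[i] = (ν'.edges.drop ν.edges.length)[i]'(by rw [← hts]; exact hi) := by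
              congr 1
            rw [this, List.getElem_drop]
          have h5 := hb' (ν.edges.length + i) h2
          simp only [List.get_eq_getElem] at h5
          rw [h4]
          exact h5.symm
        have hsrc : ∀ f ∈ t.head?, G.s f = G.s (P.edges 0) := by
          intro f hf
          cases t with
          | nil => simp at hf
          | cons a l =>
            simp only [List.head?_cons, Option.mem_def, Option.some.injEq] at hf
            subst hf
            have := hget 0 (by simp)
            simp only [List.getElem_cons_zero] at this
            rw [this, hc 0]
        refine ⟨⟨G.s (P.edges 0), t, hsrc, hchain⟩, ⟨?_, ?_, ?_⟩, ht1⟩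
        · -- rng = s (P'.edges 0)
          show (Option.map G.r t.getLast?).getD (G.s (P.edges 0)) = G.s (P'.edges 0)
          by_cases ht : t = []
          · subst ht
            show G.s (P.edges 0) = G.s (P'.edges 0)
            have hlen : ν'.edges.length = ν.edges.length := by
              rw [ht1]; simp
            have e1 := hc 0
            have e2 := hc' 0
            rw [hlen] at e2
            rw [Nat.add_zero] at e1 e2
            rw [← e1, e2]
          · have hgl : ν'.edges.getLast? = t.getLast? := by
              rw [ht1, List.getLast?_append_of_ne_nil _ ht]
            have : (Option.map G.r t.getLast?).getD (G.s (P.edges 0)) = ν'.rng := by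
              unfold FinPath.rng
              rw [hgl]
              exact getD_last_indep ht _ _
            rw [this, ha']
        · -- ∀ i < t.length, P.edges i = t.get i
          intro i hi
          simp only [List.get_eq_getElem]
          rw [hget i hi, ← hc i]
        · -- ∀ i, P.edges (t.length + i) = P'.edges i
          intro i
          show P.edges (t.length + i) = P'.edges i
          have e1 := hc (t.length + i)
          have e2 := hc' i
          rw [← e1, ← e2]
          congr 1
          omega

theorem cat_inj_left {μ : G.FinPath} {p q₁ q₂ : G.BPath}
    (h1 : IsCat μ p q₁) (h2 : IsCat μ p q₂) : q₁ = q₂ := by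
  obtain ⟨pv, hps⟩ := p
  obtain ⟨q₁v, h₁s⟩ := q₁
  obtain ⟨q₂v, h₂s⟩ := q₂
  cases pv with
  | inl ρ =>
    cases q₁v with
    | inr => exact absurd h1 not_isCat_lr
    | inl ξ₁ =>
      cases q₂v with
      | inr => exact absurd h2 not_isCat_lr
      | inl ξ₂ =>
        obtain ⟨_, h1b, h1c⟩ := isCat_ll.mp h1
        obtain ⟨_, h2b, h2c⟩ := isCat_ll.mp h2
        refine BPath.ext' ?_
        simp only
        congr 1
        exact FinPath.ext' (h1b.trans h2b.symm) (h1c.trans h2c.symm)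
  | inr P =>
    cases q₁v with
    | inl => exact absurd h1 not_isCat_rl
    | inr Q₁ =>
      cases q₂v with
      | inl => exact absurd h2 not_isCat_rl
      | inr Q₂ =>
        obtain ⟨_, h1b, h1c⟩ := isCat_rr.mp h1
        obtain ⟨_, h2b, h2c⟩ := isCat_rr.mp h2
        refine BPath.ext' ?_
        simp only
        congr 1
        refine InfPath.ext' (funext fun i => ?_)
        rcases Nat.lt_or_ge i μ.edges.length with hlt | hge
        · rw [h1b i hlt, h2b i hlt]
        · obtain ⟨j, rfl⟩ : ∃ j, i = μ.edges.length + j := ⟨i - μ.edges.length, by omega⟩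
          rw [h1c j, h2c j]

end DirGraph

namespace DirGraph

variable {G : DirGraph}

theorem vertexPath_length (v : G.V) : (vertexPath G v).length = 0 := rfl

theorem tailEq_refl (x : G.BPath) : TailEq x x :=
  ⟨0, vertexPath G x.src, vertexPath G x.src, x, cat_trivial x, cat_trivial x, by simp⟩

theorem tailEq_symm {x y : G.BPath} (h : TailEq x y) : TailEq y x := by
  obtain ⟨k, μ, ν, p, h1, h2, h3⟩ := h
  exact ⟨-k, ν, μ, p, h2, h1, by omega⟩

theorem tailEqLag_cat {μ : G.FinPath} {p q : G.BPath} (h : IsCat μ p q) :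
    TailEqLag q p μ.length :=
  ⟨μ, vertexPath G p.src, p, h, cat_trivial p, by simp [FinPath.length, vertexPath]⟩

theorem tailEq_trans {x y z : G.BPath} (hxy : TailEq x y) (hyz : TailEq y z) :
    TailEq x z := by
  obtain ⟨k₁, μ, ν, p, h1, h2, -⟩ := hxy
  obtain ⟨k₂, μ', ν', p', h3, h4, -⟩ := hyz
  rcases le_or_gt ν.edges.length μ'.edges.length with hle | hlt
  · obtain ⟨ρ, hρ1, hρ2⟩ := cat_refine h2 h3 hle
    obtain ⟨σ, hσ1, hσ2, hσ3⟩ := cat_assoc h1 hρ1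
    exact ⟨(σ.length : ℤ) - ν'.length, σ, ν', p', hσ3, h4, rfl⟩
  · obtain ⟨ρ, hρ1, hρ2⟩ := cat_refine h3 h2 hlt.le
    obtain ⟨σ, hσ1, hσ2, hσ3⟩ := cat_assoc h4 hρ1
    exact ⟨(μ.length : ℤ) - σ.length, μ, σ, p, h1, hσ3, rfl⟩

theorem tailEq_of_cat_left {μ : G.FinPath} {p q x : G.BPath} (hq : TailEq q x)
    (h : IsCat μ p q) : TailEq p x :=
  tailEq_trans (tailEq_symm ⟨_, tailEqLag_cat h⟩) hq

theorem tailEq_of_cat_right {μ : G.FinPath} {p q x : G.BPath} (hp : TailEq p x)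
    (h : IsCat μ p q) : TailEq q x :=
  tailEq_trans ⟨_, tailEqLag_cat h⟩ hp

theorem mem_orbit_iff {x y : G.BPath} : y ∈ orbit x ↔ TailEq y x := Iff.rfl

theorem self_mem_orbit (x : G.BPath) : x ∈ orbit x := tailEq_refl x

theorem orbit_eq_of_tailEq {x y : G.BPath} (h : TailEq x y) : orbit x = orbit y := by
  ext z
  exact ⟨fun hz => tailEq_trans hz h, fun hz => tailEq_trans hz (tailEq_symm h)⟩

theorem peel_of_cat {μ : G.FinPath} {p q : G.BPath} {e : G.E} {t : List G.E}
    (h : IsCat μ p q) (hμ : μ.edges = e :: t) :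
    ∃ q', IsCat (singleE G e) q' q := by
  obtain ⟨qv, hqs⟩ := q
  cases qv with
  | inl ξ =>
    obtain ⟨pv, hps⟩ := p
    cases pv with
    | inr => exact absurd h not_isCat_rl
    | inl ρ =>
      obtain ⟨-, -, hc⟩ := isCat_ll.mp h
      rw [hμ] at hc
      exact peel_inl rfl hc
  | inr Q =>
    obtain ⟨pv, hps⟩ := p
    cases pv with
    | inl => exact absurd h not_isCat_lr
    | inr P =>
      obtain ⟨-, hb, -⟩ := isCat_rr.mp h
      have h0 : 0 < μ.edges.length := by rw [hμ]; simp
      have he : Q.edges 0 = e := by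
        have := hb 0 h0
        rw [this]
        simp [List.get_eq_getElem, hμ]
      have := peel_inr (q := ⟨Sum.inr Q, hqs⟩) (Q := Q) rfl
      rwa [he] at this

theorem cat_cons {μ : G.FinPath} {p q : G.BPath} {e : G.E} {t : List G.E}
    (h : IsCat μ p q) (hμ : μ.edges = e :: t) :
    ∃ (q' : G.BPath) (ρ : G.FinPath),
      IsCat (singleE G e) q' q ∧ IsCat ρ p q' ∧ ρ.edges = t := by
  obtain ⟨q', hq'⟩ := peel_of_cat h hμ
  obtain ⟨ρ, hρ1, hρ2⟩ := cat_refine hq' h (by rw [hμ]; simp [singleE])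
  rw [hμ] at hρ2
  have : (singleE G e).edges = [e] := rfl
  rw [this] at hρ2
  simp only [List.singleton_append, List.cons.injEq] at hρ2
  exact ⟨q', ρ, hq', hρ1, hρ2.2.symm⟩

theorem src_singleE (e : G.E) : (singleE G e).src = G.s e := rfl

theorem cat_uncons {μ : G.FinPath} {p q q' : G.BPath} {e : G.E} {t : List G.E}
    (hμ : μ.edges = e :: t) (h1 : IsCat (singleE G e) q' q) {ρ : G.FinPath}
    (h2 : IsCat ρ p q') (hρ : ρ.edges = t) : IsCat μ p q := by
  obtain ⟨σ, hσ1, hσ2, hσ3⟩ := cat_assoc h1 h2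
  have hμσ : μ = σ := by
    refine FinPath.ext' ?_ ?_
    · rw [hσ1, src_singleE]
      exact (μ.src_eq e (by rw [hμ]; rfl)).symm
    · rw [hσ2, hμ, hρ]; rfl
  rwa [hμσ]

theorem vertexBPath_src (v : G.V) (h : IsSingular G v) :
    BPath.src (vertexBPath G v h) = v := rfl

theorem cat_inl_trivial {x : G.BPath} {μ₀ : G.FinPath} (hx : x.1 = Sum.inl μ₀)
    (h : IsSingular G μ₀.rng) : IsCat μ₀ (vertexBPath G μ₀.rng h) x := by
  obtain ⟨xv, hxs⟩ := x
  simp only at hx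
  subst hx
  exact isCat_ll.mpr ⟨rfl, rfl, by rw [vertexPath, List.append_nil]⟩

theorem no_cat_single_vertexBPath (e : G.E) (v : G.V) (h : IsSingular G v) :
    ¬ ∃ p, IsCat (singleE G e) p (vertexBPath G v h) := by
  rintro ⟨p, hp⟩
  obtain ⟨pv, hps⟩ := p
  cases pv with
  | inl ρ =>
    obtain ⟨-, -, hc⟩ := isCat_ll.mp hp
    simp [vertexPath, singleE] at hc
  | inr P => exact absurd hp not_isCat_rl

end DirGraph

set_option linter.unusedSectionVars false
namespace DirGraph

variable {G : DirGraph} {K : Type} [Field K] {x : G.BPath} {M : Type}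
  [AddCommGroup M] [Module K M] [Module (LPA G K) M] [IsScalarTower K (LPA G K) M]

/-- the ghost word of a list of edges -/
def gword (G : DirGraph) (K : Type) [Field K] (l : List G.E) : LPA G K :=
  (l.reverse.map (ofG G K)).prod

theorem gword_nil : gword G K [] = 1 := rfl

theorem gword_cons (e : G.E) (t : List G.E) :
    gword G K (e :: t) = gword G K t * ofG G K e := by
  unfold gword
  rw [List.reverse_cons, List.map_append, List.prod_append]
  simp

theorem pathStarElem_def (μ : G.FinPath) :
    pathStarElem G K μ = gword G K μ.edges * ofV G K μ.src := rfl

theorem g_smul_one (sp : ChenSpec G K (fun _ => 1) x M) (e : G.E) (p q : orbit x)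
    (h : IsCat (singleE G e) ↑p ↑q) : ofG G K e • sp.basis q = sp.basis p := by
  have := sp.act_g e p q h
  simpa using this

theorem gword_smul (sp : ChenSpec G K (fun _ => 1) x M) :
    ∀ (l : List G.E) (μ : G.FinPath), μ.edges = l → ∀ (q : orbit x) (p : G.BPath),
      IsCat μ p ↑q → ∃ hp : p ∈ orbit x, gword G K l • sp.basis q = sp.basis ⟨p, hp⟩ := by
  intro l
  induction l with
  | nil =>
    intro μ hl q p h
    have hpq : p = ↑q := cat_nil h hl
    subst hpq
    exact ⟨q.2, by rw [gword_nil, one_smul]⟩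
  | cons e t ih =>
    intro μ hl q p h
    obtain ⟨q', ρ, hq', hρ, hρe⟩ := cat_cons h hl
    have hq'mem : q' ∈ orbit x := tailEq_of_cat_left q.2 hq'
    obtain ⟨hp, ih'⟩ := ih ρ hρe ⟨q', hq'mem⟩ p hρ
    refine ⟨hp, ?_⟩
    rw [gword_cons, mul_smul, g_smul_one sp e ⟨q', hq'mem⟩ q hq', ih']

theorem gword_smul_zero (sp : ChenSpec G K (fun _ => 1) x M) :
    ∀ (l : List G.E) (μ : G.FinPath), μ.edges = l → ∀ (q : orbit x),
      μ.src = BPath.src ↑q → (¬ ∃ p, IsCat μ p ↑q) → gword G K l • sp.basis q = 0 := by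
  intro l
  induction l with
  | nil =>
    intro μ hl q hsrc hno
    exfalso
    apply hno
    refine ⟨q.val, ?_⟩
    have hμ : μ = vertexPath G (BPath.src (q : G.BPath)) := FinPath.ext' hsrc hl
    rw [hμ]
    exact cat_trivial (q : G.BPath)
  | cons e t ih =>
    intro μ hl q hsrc hno
    by_cases hex : ∃ q', IsCat (singleE G e) q' ↑q
    · obtain ⟨q', hq'⟩ := hex
      have hq'mem : q' ∈ orbit x := tailEq_of_cat_left q.2 hq'
      have hchain : t.Chain' (fun e f => G.r e = G.s f) := by
        have := μ.chain; rw [hl] at this; exact this.tail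
      have hq'src : BPath.src q' = G.r e := by
        have := hq'.rng_eq
        rw [← this]; rfl
      have hsrc' : ∀ f ∈ t.head?, G.s f = BPath.src q' := by
        intro f hf
        rw [hq'src]
        cases t with
        | nil => simp at hf
        | cons f' t' =>
          simp only [List.head?_cons, Option.mem_def, Option.some.injEq] at hf
          subst hf
          have := μ.chain
          rw [hl] at this
          exact (List.isChain_cons_cons.mp this).1.symm
      have hno' : ¬ ∃ p, IsCat (⟨BPath.src q', t, hsrc', hchain⟩ : G.FinPath) p q' := by
        rintro ⟨p, hp⟩
        exact hno ⟨p, cat_uncons hl hq' hp rfl⟩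
      rw [gword_cons, mul_smul, g_smul_one sp e ⟨q', hq'mem⟩ q hq']
      exact ih ⟨BPath.src q', t, hsrc', hchain⟩ rfl ⟨q', hq'mem⟩ rfl hno'
    · rw [gword_cons, mul_smul, sp.act_g_zero e q hex, smul_zero]

theorem star_smul (sp : ChenSpec G K (fun _ => 1) x M) {μ : G.FinPath} {p : G.BPath}
    (q : orbit x) (h : IsCat μ p ↑q) :
    ∃ hp : p ∈ orbit x, pathStarElem G K μ • sp.basis q = sp.basis ⟨p, hp⟩ := by
  obtain ⟨hp, hh⟩ := gword_smul sp μ.edges μ rfl q p h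
  refine ⟨hp, ?_⟩
  rw [pathStarElem_def, mul_smul, sp.act_v, if_pos h.src_eq.symm, hh]

theorem star_smul_zero (sp : ChenSpec G K (fun _ => 1) x M) {μ : G.FinPath}
    (q : orbit x) (hno : ¬ ∃ p, IsCat μ p ↑q) : pathStarElem G K μ • sp.basis q = 0 := by
  rw [pathStarElem_def, mul_smul, sp.act_v]
  by_cases hsrc : μ.src = BPath.src ↑q
  · rw [if_pos hsrc]
    exact gword_smul_zero sp μ.edges μ rfl q hsrc hno
  · rw [if_neg hsrc, smul_zero]

end DirGraph

set_option linter.unusedSectionVars false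
namespace DirGraph

theorem adjoin_gens (G : DirGraph) (K : Type) [Field K] :
    Algebra.adjoin K
      (Set.range (ofV G K) ∪ Set.range (ofE G K) ∪ Set.range (ofG G K)) = ⊤ := by
  rw [eq_top_iff]
  rintro a -
  obtain ⟨b, rfl⟩ := RingQuot.mkAlgHom_surjective K (LRel G K) a
  induction b using FreeAlgebra.induction with
  | grade0 r =>
    rw [AlgHom.commutes]
    exact Subalgebra.algebraMap_mem _ r
  | grade1 g =>
    apply Algebra.subset_adjoin
    cases g with
    | vtx v => exact Or.inl (Or.inl ⟨v, rfl⟩)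
    | edg e => exact Or.inl (Or.inr ⟨e, rfl⟩)
    | ghd e => exact Or.inr ⟨e, rfl⟩
  | mul a b ha hb => rw [map_mul]; exact mul_mem ha hb
  | add a b ha hb => rw [map_add]; exact add_mem ha hb

variable {G : DirGraph} {K : Type} [Field K] {x y : G.BPath} {M N : Type}
  [AddCommGroup M] [Module K M] [Module (LPA G K) M] [IsScalarTower K (LPA G K) M]
  [AddCommGroup N] [Module K N] [Module (LPA G K) N] [IsScalarTower K (LPA G K) N]

/-- the action of an element of the Leavitt path algebra as a `K`-linear map -/
def aSmul (a : LPA G K) : M →ₗ[K] M where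
  toFun m := a • m
  map_add' m n := smul_add a m n
  map_smul' c m := smul_comm a c m

theorem comm_of_basis_comm {ι : Type*} (g : M ≃ₗ[K] N) (a : LPA G K)
    (b : Module.Basis ι K M) (h : ∀ i, g (a • b i) = a • g (b i)) :
    ∀ m : M, g (a • m) = a • g m := by
  have key : g.toLinearMap.comp (aSmul a) = (aSmul a).comp g.toLinearMap :=
    Module.Basis.ext b h
  intro m
  exact congrArg (fun f => f m) (congrArg DFunLike.coe key)

/-- lift a K-linear equivalence commuting with the LPA action to an LPA-linear one -/
def liftEquiv (g : M ≃ₗ[K] N) (hg : ∀ (a : LPA G K) (m : M), g (a • m) = a • g m) :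
    M ≃ₗ[LPA G K] N where
  toFun := g
  map_add' := map_add g
  map_smul' := hg
  invFun := g.symm
  left_inv := g.left_inv
  right_inv := g.right_inv

/-- transport along an equality of orbits -/
def orbEquiv {x y : G.BPath} (h : orbit x = orbit y) : orbit x ≃ orbit y :=
  ⟨fun i => ⟨i.1, h ▸ i.2⟩, fun j => ⟨j.1, h.symm ▸ j.2⟩,
    fun i => Subtype.ext rfl, fun j => Subtype.ext rfl⟩

theorem orbEquiv_coe {x y : G.BPath} (h : orbit x = orbit y) (i : orbit x) :
    ((orbEquiv h i : G.BPath)) = ↑i := rfl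

theorem bwd (spM : ChenSpec G K (fun _ => 1) x M) (spN : ChenSpec G K (fun _ => 1) y N)
    (h : TailEq x y) : Nonempty (M ≃ₗ[LPA G K] N) := by
  have horb : orbit x = orbit y := orbit_eq_of_tailEq h
  set e : orbit x ≃ orbit y := orbEquiv horb with he
  set g : M ≃ₗ[K] N := spM.basis.equiv spN.basis e with hg
  have hbase : ∀ i : orbit x, g (spM.basis i) = spN.basis (e i) := fun i =>
    spM.basis.equiv_apply i spN.basis e
  have hgen : ∀ a ∈ (Set.range (ofV G K) ∪ Set.range (ofE G K) ∪ Set.range (ofG G K)),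
      ∀ m : M, g (a • m) = a • g m := by
    rintro a ((⟨v, rfl⟩ | ⟨ed, rfl⟩) | ⟨ed, rfl⟩)
    · refine comm_of_basis_comm g _ spM.basis fun i => ?_
      rw [spM.act_v, hbase, spN.act_v]
      have hsrc : BPath.src ((e i : G.BPath)) = BPath.src ((i : G.BPath)) := rfl
      rw [hsrc]
      split_ifs with h1
      · exact hbase i
      · exact map_zero g
    · refine comm_of_basis_comm g _ spM.basis fun i => ?_
      by_cases hq : ∃ q, IsCat (singleE G ed) (i : G.BPath) q
      · obtain ⟨q, hq⟩ := hq
        have hqx : q ∈ orbit x := tailEq_of_cat_right i.2 hq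
        have hqy : q ∈ orbit y := horb ▸ hqx
        have h1 := spM.act_e ed i ⟨q, hqx⟩ hq
        have h2 := spN.act_e ed (e i) ⟨q, hqy⟩ hq
        rw [h1, hbase, h2, one_smul, one_smul, hbase]
        congr 1
      · have h1 := spM.act_e_zero ed i hq
        have h2 := spN.act_e_zero ed (e i) hq
        rw [h1, hbase, h2, map_zero]
    · refine comm_of_basis_comm g _ spM.basis fun i => ?_
      by_cases hp : ∃ p, IsCat (singleE G ed) p (i : G.BPath)
      · obtain ⟨p, hp⟩ := hp
        have hpx : p ∈ orbit x := tailEq_of_cat_left i.2 hp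
        have hpy : p ∈ orbit y := horb ▸ hpx
        have h1 := spM.act_g ed ⟨p, hpx⟩ i hp
        have h2 := spN.act_g ed ⟨p, hpy⟩ (e i) hp
        rw [h1, hbase, h2]
        simp only [inv_one, one_smul]
        rw [hbase]
        congr 1
      · have h1 := spM.act_g_zero ed i hp
        have h2 := spN.act_g_zero ed (e i) hp
        rw [h1, hbase, h2, map_zero]
  have hcomm : ∀ (a : LPA G K) (m : M), g (a • m) = a • g m := by
    intro a m
    have ha : a ∈ Algebra.adjoin K
        (Set.range (ofV G K) ∪ Set.range (ofE G K) ∪ Set.range (ofG G K)) := by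
      rw [adjoin_gens G K]; trivial
    revert m
    induction ha using Algebra.adjoin_induction with
    | mem a ha => exact hgen a ha
    | algebraMap r =>
      intro m
      rw [algebraMap_smul, map_smul, algebraMap_smul]
    | add a b ha hb iha ihb =>
      intro m
      rw [add_smul, add_smul, map_add, iha, ihb]
    | mul a b ha hb iha ihb =>
      intro m
      rw [mul_smul, mul_smul, iha, ihb]
  exact ⟨liftEquiv g hcomm⟩

end DirGraph

set_option linter.unusedSectionVars false
namespace DirGraph

variable {G : DirGraph}

/-- the length-`n` prefix of an infinite path -/
def prefixPath (P : G.InfPath) (n : ℕ) : G.FinPath where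
  src := P.src
  edges := List.ofFn fun i : Fin n => P.edges i
  src_eq := by
    intro e he
    cases n with
    | zero => simp at he
    | succ k =>
      rw [List.ofFn_succ] at he
      simp only [List.head?_cons, Option.mem_def, Option.some.injEq] at he
      subst he; rfl
  chain := by
    refine List.isChain_iff_getElem.mpr ?_
    intro i hi
    simp only [List.length_ofFn] at hi
    simp only [List.getElem_ofFn]
    simpa using P.chain i

theorem prefixPath_edges (P : G.InfPath) (n : ℕ) :
    (prefixPath P n).edges = List.ofFn fun i : Fin n => P.edges i := rfl

theorem prefixPath_length (P : G.InfPath) (n : ℕ) :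
    (prefixPath P n).edges.length = n := by simp [prefixPath_edges]

/-- the shift of an infinite path -/
def tailInf (P : G.InfPath) (n : ℕ) : G.InfPath where
  edges i := P.edges (n + i)
  chain i := by simpa [Nat.add_assoc] using P.chain (n + i)

def tailBP (P : G.InfPath) (n : ℕ) : G.BPath :=
  ⟨Sum.inr (tailInf P n), fun μ h => by simp at h⟩

theorem cat_prefix {q : G.BPath} {P : G.InfPath} (hq : q.1 = Sum.inr P) (n : ℕ) :
    IsCat (prefixPath P n) (tailBP P n) q := by
  obtain ⟨qv, hqs⟩ := q
  simp only at hq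
  subst hq
  refine isCat_rr.mpr ⟨?_, ?_, ?_⟩
  · show (prefixPath P n).rng = G.s (P.edges (n + 0))
    cases n with
    | zero =>
      rw [rng_nil (by simp [prefixPath_edges])]
      rfl
    | succ k =>
      have hlast : (prefixPath P (k + 1)).edges.getLast? = some (P.edges k) := by
        rw [prefixPath_edges, List.ofFn_succ']
        simp
      rw [rng_mem_getLast? (by rw [hlast]; rfl)]
      exact P.chain k
  · intro i hi
    rw [prefixPath_length] at hi
    simp [prefixPath_edges, List.get_ofFn]
  · intro i
    show P.edges ((prefixPath P n).edges.length + i) = P.edges (n + i)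
    rw [prefixPath_length]

variable {K : Type} [Field K] {x y : G.BPath} {M N : Type}
  [AddCommGroup M] [Module K M] [Module (LPA G K) M] [IsScalarTower K (LPA G K) M]
  [AddCommGroup N] [Module K N] [Module (LPA G K) N] [IsScalarTower K (LPA G K) N]

theorem smul_expand (sp : ChenSpec G K (fun _ => 1) y N) (a : LPA G K) (n₀ : N) :
    a • n₀ = ∑ q ∈ (sp.basis.repr n₀).support, (sp.basis.repr n₀) q • (a • sp.basis q) := by
  conv_lhs => rw [← sp.basis.linearCombination_repr n₀, Finsupp.linearCombination_apply,
    Finsupp.sum]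
  rw [Finset.smul_sum]
  exact Finset.sum_congr rfl fun q _ => (smul_comm _ a _).symm

theorem repr_sum_eval (sp : ChenSpec G K (fun _ => 1) y N) (a : LPA G K) (n₀ : N)
    (j : orbit y) :
    sp.basis.repr (a • n₀) j = ∑ q ∈ (sp.basis.repr n₀).support,
      (sp.basis.repr n₀) q * (sp.basis.repr (a • sp.basis q)) j := by
  conv_lhs => rw [smul_expand sp a n₀]
  rw [map_sum, Finset.sum_apply']
  exact Finset.sum_congr rfl fun q _ => by rw [map_smul, Finsupp.smul_apply, smul_eq_mul]

theorem cat_edges_inl {μ : G.FinPath} {p q : G.BPath} {ξ : G.FinPath}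
    (h : IsCat μ p q) (hq : q.1 = Sum.inl ξ) :
    ∃ ρ : G.FinPath, p.1 = Sum.inl ρ ∧ ξ.edges = μ.edges ++ ρ.edges := by
  obtain ⟨qv, hqs⟩ := q
  simp only at hq; subst hq
  obtain ⟨pv, hps⟩ := p
  cases pv with
  | inr => exact absurd h not_isCat_rl
  | inl ρ => exact ⟨ρ, rfl, (isCat_ll.mp h).2.2⟩

theorem cat_edges_inr {μ : G.FinPath} {p q : G.BPath} {Q : G.InfPath}
    (h : IsCat μ p q) (hq : q.1 = Sum.inr Q) :
    ∀ i (hi : i < μ.edges.length), Q.edges i = μ.edges.get ⟨i, hi⟩ := by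
  obtain ⟨qv, hqs⟩ := q
  simp only at hq; subst hq
  obtain ⟨pv, hps⟩ := p
  cases pv with
  | inl => exact absurd h not_isCat_lr
  | inr P => exact (isCat_rr.mp h).2.1

theorem src_of_inl {q : G.BPath} {ξ : G.FinPath} (h : q.1 = Sum.inl ξ) :
    q.src = ξ.src := by
  obtain ⟨qv, hqs⟩ := q
  simp only at h; subst h
  rfl

theorem cat_inl_trivial' {x q : G.BPath} {μ₀ : G.FinPath} (hx : x.1 = Sum.inl μ₀)
    (hq : q.1 = Sum.inl (vertexPath G μ₀.rng)) : IsCat μ₀ q x := by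
  obtain ⟨xv, hxs⟩ := x
  obtain ⟨qv, hqs⟩ := q
  simp only at hx hq
  subst hx; subst hq
  exact isCat_ll.mpr ⟨rfl, rfl, by rw [vertexPath, List.append_nil]⟩

theorem fwd (spM : ChenSpec G K (fun _ => 1) x M) (spN : ChenSpec G K (fun _ => 1) y N)
    (f : M ≃ₗ[LPA G K] N) : TailEq x y := by
  set bx := spM.basis ⟨x, self_mem_orbit x⟩ with hbx
  have hfbx : f bx ≠ 0 := by
    intro h0
    exact Module.Basis.ne_zero spM.basis _ (f.map_eq_zero_iff.mp h0)
  cases hxv : x.1 with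
  | inr P =>
    -- infinite case
    have key : ∀ n : ℕ, ∃ q ∈ (spN.basis.repr (f bx)).support,
        ∃ p, IsCat (prefixPath P n) p ↑q := by
      intro n
      by_contra hcon
      push_neg at hcon
      have h0 : pathStarElem G K (prefixPath P n) • f bx = 0 := by
        rw [smul_expand spN]
        refine Finset.sum_eq_zero fun q hq => ?_
        rw [star_smul_zero spN q (by push_neg; exact fun p hp => hcon q hq p hp), smul_zero]
      obtain ⟨hp, h2⟩ := star_smul spM ⟨x, self_mem_orbit x⟩ (cat_prefix hxv n)
      rw [← map_smul, hbx, h2] at h0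
      exact Module.Basis.ne_zero spM.basis _ (f.map_eq_zero_iff.mp h0)
    choose F hF1 hF2 using key
    have hfin : ∃ q, {n | F n = q}.Infinite := by
      by_contra hc
      push_neg at hc
      have hsub : (Set.univ : Set ℕ) ⊆
          ⋃ q ∈ ((spN.basis.repr (f bx)).support : Finset _), {n | F n = q} := by
        intro n _
        exact Set.mem_biUnion (hF1 n) rfl
      exact Set.infinite_univ (α := ℕ)
        ((Set.Finite.biUnion (Finset.finite_toSet _) fun q _ => hc q).subset hsub)
    obtain ⟨q, hq⟩ := hfin
    have hqy : TailEq (q : G.BPath) y := q.2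
    have hqx : (q : G.BPath) = x := by
      refine BPath.ext' ?_
      cases hqv : (q : G.BPath).1 with
      | inl ξ =>
        exfalso
        obtain ⟨n, hn1, hn2⟩ := hq.exists_gt ξ.edges.length
        obtain ⟨p, hp⟩ := hF2 n
        rw [show F n = q from hn1] at hp
        obtain ⟨ρ, -, hce⟩ := cat_edges_inl hp hqv
        have := congrArg List.length hce
        rw [List.length_append, prefixPath_length] at this
        omega
      | inr Q =>
        rw [hxv]
        congr 1
        refine InfPath.ext' (funext fun i => ?_)
        obtain ⟨n, hn1, hn2⟩ := hq.exists_gt i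
        obtain ⟨p, hp⟩ := hF2 n
        rw [show F n = q from hn1] at hp
        have := cat_edges_inr hp hqv i (by rw [prefixPath_length]; exact hn2)
        rw [this]
        simp [prefixPath_edges, List.get_ofFn]
    rw [← hqx]
    exact hqy
  | inl μ₀ =>
    -- finite case
    have hv : IsSingular G μ₀.rng := x.2 μ₀ hxv
    set w : G.BPath := vertexBPath G μ₀.rng hv with hw
    have hcatw : IsCat μ₀ w x := cat_inl_trivial hxv hv
    have hwx : w ∈ orbit x := tailEq_of_cat_left (self_mem_orbit x) hcatw
    obtain ⟨hw', hbw⟩ := star_smul spM ⟨x, self_mem_orbit x⟩ hcatw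
    set n₀ : N := f (spM.basis ⟨w, hw'⟩) with hn₀def
    have hn₀ : n₀ ≠ 0 := by
      intro h0
      exact Module.Basis.ne_zero spM.basis _ (f.map_eq_zero_iff.mp h0)
    set c := spN.basis.repr n₀ with hc
    have hTne : c.support.Nonempty := by
      rw [Finsupp.support_nonempty_iff]
      intro h0
      apply hn₀
      have := spN.basis.repr.map_eq_zero_iff.mp (hc ▸ h0)
      exact this
    -- Claim A : no basis element in the support admits a peel
    have claimA : ∀ q ∈ c.support, ∀ (e : G.E) (p : G.BPath),
        ¬ IsCat (singleE G e) p ↑q := by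
      intro q hqT e p hcat
      have hpy : p ∈ orbit y := tailEq_of_cat_left q.2 hcat
      have hzero : ofG G K e • n₀ = 0 := by
        rw [hn₀def, ← map_smul,
          spM.act_g_zero e ⟨w, hw'⟩ (no_cat_single_vertexBPath e _ hv),
          map_zero]
      have heval := repr_sum_eval spN (ofG G K e) n₀ ⟨p, hpy⟩
      rw [hzero, map_zero, Finsupp.coe_zero, Pi.zero_apply] at heval
      have hsum : ∑ q' ∈ c.support, c q' * (spN.basis.repr (ofG G K e • spN.basis q')) ⟨p, hpy⟩
          = c q := by
        rw [Finset.sum_eq_single q]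
        · rw [g_smul_one spN e ⟨p, hpy⟩ q hcat, spN.basis.repr_self,
            Finsupp.single_apply, if_pos rfl, mul_one]
        · intro q' hq'T hne
          by_cases hex : ∃ p', IsCat (singleE G e) p' ↑q'
          · obtain ⟨p', hp'⟩ := hex
            have hp'y : p' ∈ orbit y := tailEq_of_cat_left q'.2 hp'
            rw [g_smul_one spN e ⟨p', hp'y⟩ q' hp', spN.basis.repr_self,
              Finsupp.single_apply, if_neg, mul_zero]
            intro hPP
            apply hne
            have hpp : p' = p := congrArg Subtype.val hPP
            subst hpp
            exact Subtype.ext (cat_inj_left hp' hcat)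
          · rw [spN.act_g_zero e q' hex, map_zero]
            simp
        · intro hqT'
          exact absurd hqT hqT'
      rw [hsum] at heval
      exact (Finsupp.mem_support_iff.mp hqT) heval.symm
    -- Claim B : every support element has source μ₀.rng
    have claimB : ∀ q ∈ c.support, BPath.src (q : G.BPath) = μ₀.rng := by
      intro q hqT
      by_contra hsrc
      have hVsmul : ofV G K μ₀.rng • n₀ = n₀ := by
        rw [hn₀def, ← map_smul, spM.act_v,
          if_pos (show μ₀.rng = BPath.src ((⟨w, hw'⟩ : orbit x) : G.BPath) from rfl)]
      have heval := repr_sum_eval spN (ofV G K μ₀.rng) n₀ q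
      rw [hVsmul] at heval
      have hsum : ∑ q' ∈ c.support, c q' * (spN.basis.repr (ofV G K μ₀.rng • spN.basis q')) q
          = 0 := by
        refine Finset.sum_eq_zero fun q' hq'T => ?_
        rw [spN.act_v]
        split_ifs with hs
        · rw [spN.basis.repr_self, Finsupp.single_apply]
          by_cases hqq : q' = q
          · subst hqq
            exact absurd hs.symm hsrc
          · rw [if_neg hqq, mul_zero]
        · rw [map_zero]; simp
      rw [hsum] at heval
      exact (Finsupp.mem_support_iff.mp hqT) heval
    -- The support consists of the trivial path at μ₀.rng
    obtain ⟨q₀, hq₀⟩ := hTne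
    have hq₀triv : (q₀ : G.BPath).1 = Sum.inl (vertexPath G μ₀.rng) := by
      rcases hqv : (q₀ : G.BPath).1 with ξ | Q
      · cases hξe : ξ.edges with
        | nil =>
          congr 1
          refine FinPath.ext' ?_ hξe
          rw [← src_of_inl hqv, claimB q₀ hq₀]
          rfl
        | cons e t =>
          exfalso
          obtain ⟨p, hp⟩ := peel_inl hqv hξe
          exact claimA q₀ hq₀ e p hp
      · exfalso
        obtain ⟨p, hp⟩ := peel_inr hqv
        exact claimA q₀ hq₀ _ p hp
    have hcat₀ : IsCat μ₀ (q₀ : G.BPath) x := cat_inl_trivial' hxv hq₀triv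
    exact tailEq_trans ⟨_, tailEqLag_cat hcat₀⟩ q₀.2

end DirGraph

namespace DirGraph

variable {G : DirGraph}

theorem vertexBPath_tailEq {u w : G.V} {hu : IsSingular G u} {hw : IsSingular G w}
    (h : TailEq (vertexBPath G u hu) (vertexBPath G w hw)) : u = w := by
  obtain ⟨k, μ, ν, p, h1, h2, -⟩ := h
  obtain ⟨ρ, hp, he⟩ := cat_edges_inl h1 rfl
  have hμnil : μ.edges = [] := (List.append_eq_nil_iff.mp he.symm).1
  have hpu : p = vertexBPath G u hu := cat_nil h1 hμnil
  obtain ⟨ρ', hp', he'⟩ := cat_edges_inl h2 rfl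
  have hνnil : ν.edges = [] := (List.append_eq_nil_iff.mp he'.symm).1
  have hpw : p = vertexBPath G w hw := cat_nil h2 hνnil
  simpa [vertexBPath_src] using congrArg BPath.src (hpu.symm.trans hpw)

end DirGraph


open DirGraph

/-- for `x, y ∈ ∂E` not rational, `V_{[x]} ≅ V_{[y]}` as (non-graded)
`L_K(E)`-modules if and only if `[x] = [y]`, i.e. `x` and `y` are tail-equivalent.
In particular, if `x` and `y` are singular vertices then `V_{[x]} ≅ V_{[y]}` iff `x = y`. -/
theorem stmt_5 (G : DirGraph) (K : Type) [Field K]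
    (x y : G.BPath) (hx : ¬ IsRational x) (hy : ¬ IsRational y)
    (M : Type) [AddCommGroup M] [Module K M] [Module (LPA G K) M]
    [IsScalarTower K (LPA G K) M]
    (N : Type) [AddCommGroup N] [Module K N] [Module (LPA G K) N]
    [IsScalarTower K (LPA G K) N]
    (spM : ChenSpec G K (fun _ => 1) x M) (spN : ChenSpec G K (fun _ => 1) y N) :
    (Nonempty (M ≃ₗ[LPA G K] N) ↔ TailEq x y) ∧
      (∀ (u w : G.V) (hu : IsSingular G u) (hw : IsSingular G w),
        x = vertexBPath G u hu → y = vertexBPath G w hw →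
        (Nonempty (M ≃ₗ[LPA G K] N) ↔ u = w)) := by
  constructor
  · constructor
    · rintro ⟨f⟩
      exact fwd spM spN f
    · intro h
      exact bwd spM spN h
  · intro u w hu hw hxu hyw
    constructor
    · rintro ⟨f⟩
      have h := fwd spM spN f
      rw [hxu, hyw] at h
      exact vertexBPath_tailEq h
    · intro huw
      subst huw
      apply bwd spM spN
      rw [hxu, hyw]
      have hvv : vertexBPath G u hu = vertexBPath G u hw := Subtype.ext rfl
      rw [hvv]
      exact tailEq_refl _
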